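/- arXiv:2111.08765 — 5 statements merged into one kernel-verified Lean document; each statement's English description precedes it below -/
import Mathlib

section
/- Let A be a 2×2 integer matrix with determinant 1 (an element of SL(2,ℤ)). Let v = (p,q) and w = (p',q') be primitive vectors in ℤ² (i.e., gcd(p,q) = 1 and gcd(p',q') = 1). Suppose A·v = v or A·v = −v, and A·w = w or A·w = −w. Then A = I, or A = −I, or v and w determine the same slope, i.e., p·q' = p'·q. -/
/-- If `A ∈ SL(2,ℤ)` sends each of two primitive vectors `(p,q)` and `(p',q')`
to plus or minus itself, then `A = I`, or `A = -I`, or the two vectors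
determine the same slope, i.e. `p*q' = p'*q`. -/
theorem sl2_fixes_two_slopes (A : Matrix (Fin 2) (Fin 2) ℤ)
    (hA : A.det = 1) (p q p' q' : ℤ)
    (hv : IsCoprime p q) (hw : IsCoprime p' q')
    (h1 : A.mulVec ![p, q] = ![p, q] ∨ A.mulVec ![p, q] = -![p, q])
    (h2 : A.mulVec ![p', q'] = ![p', q'] ∨ A.mulVec ![p', q'] = -![p', q']) :
    A = 1 ∨ A = -1 ∨ p * q' = p' * q := by
  by_cases hD : p * q' = p' * q
  · exact Or.inr (Or.inr hD)
  have hD0 : p * q' - p' * q ≠ 0 := sub_ne_zero.mpr hD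
  set a := A 0 0 with ha; set b := A 0 1 with hb
  set c := A 1 0 with hc; set d := A 1 1 with hd
  have hdet : a * d - b * c = 1 := by
    rw [Matrix.det_fin_two] at hA; linarith
  rcases h1 with h1 | h1 <;> rcases h2 with h2 | h2 <;>
  · have e10 := congrFun h1 0
    have e11 := congrFun h1 1
    have e20 := congrFun h2 0
    have e21 := congrFun h2 1
    simp only [Matrix.mulVec, dotProduct, Fin.sum_univ_two,
      Matrix.cons_val_zero, Matrix.cons_val_one, Matrix.head_cons,
      Pi.neg_apply] at e10 e11 e20 e21
    rw [← ha, ← hb] at e10 e20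
    rw [← hc, ← hd] at e11 e21
    first
    | -- case (+,+): A = 1
      (left
       have Ea : (a - 1) * (p * q' - p' * q) = 0 := by linear_combination q' * e10 - q * e20
       have Eb : b * (p * q' - p' * q) = 0 := by linear_combination -p' * e10 + p * e20
       have Ec : c * (p * q' - p' * q) = 0 := by linear_combination q' * e11 - q * e21
       have Ed : (d - 1) * (p * q' - p' * q) = 0 := by linear_combination -p' * e11 + p * e21
       have ha1 : a = 1 := by have := (mul_eq_zero.mp Ea).resolve_right hD0; linarith
       have hb0 : b = 0 := (mul_eq_zero.mp Eb).resolve_right hD0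
       have hc0 : c = 0 := (mul_eq_zero.mp Ec).resolve_right hD0
       have hd1 : d = 1 := by have := (mul_eq_zero.mp Ed).resolve_right hD0; linarith
       ext i j
       fin_cases i <;> fin_cases j <;>
         simp [← ha, ← hb, ← hc, ← hd, ha1, hb0, hc0, hd1, Matrix.one_apply])
    | -- case (-,-): A = -1
      (right; left
       have Ea : (a + 1) * (p * q' - p' * q) = 0 := by linear_combination q' * e10 - q * e20
       have Eb : b * (p * q' - p' * q) = 0 := by linear_combination -p' * e10 + p * e20
       have Ec : c * (p * q' - p' * q) = 0 := by linear_combination q' * e11 - q * e21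
       have Ed : (d + 1) * (p * q' - p' * q) = 0 := by linear_combination -p' * e11 + p * e21
       have ha1 : a = -1 := by have := (mul_eq_zero.mp Ea).resolve_right hD0; linarith
       have hb0 : b = 0 := (mul_eq_zero.mp Eb).resolve_right hD0
       have hc0 : c = 0 := (mul_eq_zero.mp Ec).resolve_right hD0
       have hd1 : d = -1 := by have := (mul_eq_zero.mp Ed).resolve_right hD0; linarith
       ext i j
       fin_cases i <;> fin_cases j <;>
         simp [← ha, ← hb, ← hc, ← hd, ha1, hb0, hc0, hd1, Matrix.one_apply])
    | -- mixed case (+,-): det must be -1, contradiction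
      (exfalso
       have key : (a * d - b * c) * (p * q' - p' * q) = -(p * q' - p' * q) := by
         linear_combination (c * p' + d * q') * e10 - (a * p' + b * q') * e11
           + p * e21 - q * e20
       rw [hdet, one_mul] at key
       exact hD0 (by linarith))
    | -- mixed case (-,+)
      (exfalso
       have key : (a * d - b * c) * (p * q' - p' * q) = -(p * q' - p' * q) := by
         linear_combination (c * p' + d * q') * e10 - (a * p' + b * q') * e11
           - p * e21 + q * e20
       rw [hdet, one_mul] at key
       exact hD0 (by linarith))
end

section
/- Let φ be the 2×2 integer matrix with rows (1, 0) and (1, −1), and ψ the 2×2 integer matrix with rows (1, 0) and (−1, −1); note φ is its own inverse. Let A be a 2×2 integer matrix with determinant 1 and let p, q be integers. If A·(p, q)ᵀ = (p, q)ᵀ and (ψ·A·φ)·(−p, q)ᵀ = (−p, q)ᵀ, then p = 0. -/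
/-- With gluing matrices `φ = !![1,0;1,-1]` and `ψ = !![1,0;-1,-1]` (and `φ⁻¹ = φ`),
if a determinant-one integer matrix `A` fixes `(p,q)` and `ψ·A·φ` fixes `(-p,q)`,
then `p = 0`. -/
theorem longitude_fixed_case (A : Matrix (Fin 2) (Fin 2) ℤ) (hA : A.det = 1)
    (p q : ℤ)
    (h1 : A.mulVec ![p, q] = ![p, q])
    (h2 : ((!![1, 0; -1, -1] : Matrix (Fin 2) (Fin 2) ℤ) * A *
        (!![1, 0; 1, -1] : Matrix (Fin 2) (Fin 2) ℤ)).mulVec ![-p, q] = ![-p, q]) :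
    p = 0 := by
  set a := A 0 0 with ha
  set b := A 0 1 with hb
  set c := A 1 0 with hc
  set d := A 1 1 with hd
  have hdet : a * d - b * c = 1 := by
    rw [Matrix.det_fin_two] at hA; linarith
  have e1 := congrFun h1 0
  have e2 := congrFun h1 1
  have e3 := congrFun h2 0
  have e4 := congrFun h2 1
  simp [Matrix.mulVec, Matrix.vecMul, Matrix.mul_apply, dotProduct, Fin.sum_univ_two, ← ha, ← hb, ← hc, ← hd] at e1 e2 e3 e4
  -- e1 : a*p + b*q = p, e2 : c*p + d*q = q
  -- e3 : (a+b)p + bq = p (after signs), e4 : ...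
  have hbp : b * p = 0 := by linear_combination -e1 - e3
  have hdp : d * p = -p := by linear_combination e4 - e2 - e1 - hbp
  have hbq : b * q = -2 * p := by linear_combination d * e1 - b * e2 - p * hdet + hdp
  have hap : a * p = 3 * p := by linear_combination e1 - hbq
  have key : 4 * p ^ 2 = 0 := by linear_combination d * p * hap - p ^ 2 * hdet - c * p * hbp + 3 * p * hdp
  have : p ^ 2 = 0 := by linarith
  exact pow_eq_zero_iff (by norm_num) |>.mp this
end

section
/- Let φ be the 2×2 integer matrix with rows (1, 0) and (1, −1), and ψ the 2×2 integer matrix with rows (1, 0) and (−1, −1); note φ is its own inverse. Let A be a 2×2 integer matrix with entries a, b (first row) and c, d (second row), with determinant 1, and let p, q be integers. If A·(p, q)ᵀ = −(p, q)ᵀ and (ψ·A·φ)·(−p, q)ᵀ = (−p, q)ᵀ, then either p = 0 or the matrix A is completely determined up to the parameter a: b = 2, d = −(a + 2), and 2·c = −(a + 1)² (in particular a is odd). -/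
/-- With gluing matrices `φ = !![1,0;1,-1]` and `ψ = !![1,0;-1,-1]` (and `φ⁻¹ = φ`),
if a determinant-one integer matrix `A = !![a,b;c,d]` sends `(p,q)` to `-(p,q)` and
`ψ·A·φ` fixes `(-p,q)`, then either `p = 0` or `b = 2`, `d = -(a+2)`, and
`2*c = -(a+1)^2` (so `a` is odd). -/
theorem longitude_negated_case (a b c d p q : ℤ)
    (hA : (!![a, b; c, d] : Matrix (Fin 2) (Fin 2) ℤ).det = 1)
    (h1 : (!![a, b; c, d] : Matrix (Fin 2) (Fin 2) ℤ).mulVec ![p, q] = -![p, q])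
    (h2 : ((!![1, 0; -1, -1] : Matrix (Fin 2) (Fin 2) ℤ) *
        (!![a, b; c, d] : Matrix (Fin 2) (Fin 2) ℤ) *
        (!![1, 0; 1, -1] : Matrix (Fin 2) (Fin 2) ℤ)).mulVec ![-p, q] = ![-p, q]) :
    p = 0 ∨ (b = 2 ∧ d = -(a + 2) ∧ 2 * c = -(a + 1) ^ 2) := by
  have e1 := congrFun h1 0
  have e2 := congrFun h1 1
  have e3 := congrFun h2 0
  have e4 := congrFun h2 1
  simp [Matrix.mulVec, Matrix.mul_apply, Fin.sum_univ_two, Matrix.det_fin_two_of, Matrix.vecHead, Matrix.vecTail] at hA e1 e2 e3 e4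
  by_cases hp : p = 0
  · exact Or.inl hp
  · right
    have hb : b = 2 := by
      have : b * p = 2 * p := by linarith
      exact mul_right_cancel₀ hp this
    subst hb
    have hd : d = -(a + 2) := by
      have : (d + (a + 2)) * p = 0 := by ring_nf; linarith
      rcases mul_eq_zero.1 this with h | h
      · linarith
      · exact absurd h hp
    subst hd
    refine ⟨rfl, rfl, by linarith⟩
end

section
/- Let φ be the 2×2 integer matrix with rows (1, 0) and (1, −1), and ψ the 2×2 integer matrix with rows (1, 0) and (−1, −1); note φ is its own inverse. Let A be a 2×2 integer matrix with determinant 1 and let p, q be integers with p ≠ 0. If A·(p, q)ᵀ = −(p, q)ᵀ and (ψ·A·φ)·(−p, q)ᵀ = (−p, q)ᵀ, then A has infinite order: A^n is not the identity matrix for any integer n ≥ 1. -/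
/-- With gluing matrices `φ = !![1,0;1,-1]` and `ψ = !![1,0;-1,-1]` (and `φ⁻¹ = φ`),
if a determinant-one integer matrix `A` sends `(p,q)` to `-(p,q)` with `p ≠ 0` and
`ψ·A·φ` fixes `(-p,q)`, then `A` has infinite order: `A^n ≠ 1` for all `n ≥ 1`. -/
theorem longitude_negated_infinite_order (A : Matrix (Fin 2) (Fin 2) ℤ)
    (hA : A.det = 1) (p q : ℤ) (hp : p ≠ 0)
    (h1 : A.mulVec ![p, q] = -![p, q])
    (h2 : ((!![1, 0; -1, -1] : Matrix (Fin 2) (Fin 2) ℤ) * A *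
        (!![1, 0; 1, -1] : Matrix (Fin 2) (Fin 2) ℤ)).mulVec ![-p, q] = ![-p, q]) :
    ∀ n : ℕ, 1 ≤ n → A ^ n ≠ 1 := by
  set a := A 0 0 with ha
  set b := A 0 1 with hb
  set c := A 1 0 with hc
  set d := A 1 1 with hd
  have e10 : a * p + b * q = -p := by
    have := congrFun h1 0
    simpa [Matrix.mulVec, dotProduct, Fin.sum_univ_two, ← ha, ← hb] using this
  have e11 : c * p + d * q = -q := by
    have := congrFun h1 1
    simpa [Matrix.mulVec, dotProduct, Fin.sum_univ_two, ← hc, ← hd] using this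
  have e20 : -((a + b) * p) + -(b * q) = -p := by
    have := congrFun h2 0
    simp [Matrix.mulVec, Matrix.vecMul, dotProduct, Matrix.mul_apply,
      Fin.sum_univ_two, ← ha, ← hb, ← hc, ← hd] at this
    linarith
  have e21 : (a + b + c + d) * p + (b + d) * q = q := by
    have := congrFun h2 1
    simp [Matrix.mulVec, Matrix.vecMul, dotProduct, Matrix.mul_apply,
      Fin.sum_univ_two, ← ha, ← hb, ← hc, ← hd] at this
    linarith
  -- derive b = 2 and d = -(a+2)
  have hb2 : b = 2 := by
    have h : (b - 2) * p = 0 := by linear_combination - e10 - e20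
    rcases mul_eq_zero.mp h with h | h
    · linarith
    · exact absurd h hp
  have hd2 : d = -(a + 2) := by
    have h : (a + 2 + d) * p = 0 := by linear_combination e21 - e11 - q * hb2 - p * hb2
    rcases mul_eq_zero.mp h with h | h
    · linarith
    · exact absurd h hp
  have hdet : a * d - b * c = 1 := by
    have := A.det_fin_two
    rw [hA] at this
    linarith [this.symm]
  have hc2 : 2 * c = -(a + 1) ^ 2 := by
    rw [hb2, hd2] at hdet
    linear_combination - hdet
  -- A = N - 1 with N² = 0
  set N : Matrix (Fin 2) (Fin 2) ℤ := !![a + 1, 2; c, -(a + 1)] with hN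
  have hAN : A = (-1 : ℤ) • (1 - N) := by
    ext i j
    fin_cases i <;> fin_cases j <;>
      simp [hN, ← ha, ← hb, ← hc, ← hd, Matrix.one_apply] <;> omega
  have hN2 : N * N = 0 := by
    ext i j
    fin_cases i <;> fin_cases j <;>
      simp [hN, Matrix.mul_apply, Fin.sum_univ_two] <;> nlinarith
  have key : ∀ n : ℕ, (1 - N) ^ n = 1 - (n : ℤ) • N := by
    intro n
    induction n with
    | zero => simp
    | succ m ih =>
      rw [pow_succ, ih]
      push_cast
      rw [sub_mul, one_mul, mul_sub, mul_one, smul_mul_assoc, hN2]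
      rw [smul_zero, sub_zero, add_smul, one_smul]
      abel
  intro n hn hcon
  have hAn : ((-1 : ℤ) ^ n) • ((1 : Matrix (Fin 2) (Fin 2) ℤ) - (n : ℤ) • N) = 1 := by
    rw [← key, ← smul_pow, ← hAN, hcon]
  have h01 := congrFun (congrFun hAn 0) 1
  simp [Matrix.one_apply, Matrix.smul_apply, Matrix.sub_apply, hN] at h01
  omega
end

section
/- Let φ be the 2×2 integer matrix with rows (1, 0) and (1, −1), and ψ the 2×2 integer matrix with rows (1, 0) and (−1, −1); note φ is its own inverse. Let A be a 2×2 integer matrix with determinant −1 and let p, q be integers. If (ψ·A)·(p, q)ᵀ = (−p, q)ᵀ and (A·φ)·(−p, q)ᵀ = (p, q)ᵀ, then p = 0. -/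
/-- With gluing matrices `φ = !![1,0;1,-1]` and `ψ = !![1,0;-1,-1]` (and `φ⁻¹ = φ`),
if a determinant `-1` integer matrix `A` satisfies `ψ·A·(p,q)ᵀ = (-p,q)ᵀ` and
`A·φ·(-p,q)ᵀ = (p,q)ᵀ`, then `p = 0`. -/
theorem longitude_swapped_case (A : Matrix (Fin 2) (Fin 2) ℤ) (hA : A.det = -1)
    (p q : ℤ)
    (h1 : ((!![1, 0; -1, -1] : Matrix (Fin 2) (Fin 2) ℤ) * A).mulVec ![p, q] = ![-p, q])
    (h2 : (A * (!![1, 0; 1, -1] : Matrix (Fin 2) (Fin 2) ℤ)).mulVec ![-p, q] = ![p, q]) :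
    p = 0 := by
  have e1 := congrFun h1 0
  have e2 := congrFun h1 1
  have e3 := congrFun h2 0
  have e4 := congrFun h2 1
  simp [Matrix.mulVec, Matrix.mul_apply, dotProduct, Fin.sum_univ_two] at e1 e2 e3 e4
  rw [Matrix.det_fin_two] at hA
  set a := A 0 0; set b := A 0 1; set c := A 1 0; set d := A 1 1
  have hb : b * p = 0 := by linarith
  rcases mul_eq_zero.mp hb with hb0 | hp
  · have ha : (a + 1) * p = 0 := by linear_combination e1 - q * hb0
    rcases mul_eq_zero.mp ha with ha0 | hp
    · have ha' : a = -1 := by linarith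
      have hd : d = 1 := by linear_combination -hA - c * hb0 + d * ha0
      have h2p : 2 * p = 0 := by linear_combination e2 - e4 - p * hd + p * ha' + q * hb0
      omega
    · exact hp
  · exact hp
end
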